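/- In the equational system Mil⁻, every star expression e is provably equal to the sum of its termination constant and the sum over all its action derivatives: e = τ(e) + Σ_{(a,e') with e —a→ e'} a · e', where τ(e) = 1 if e↓ and τ(e) = 0 otherwise, and the sum is taken over any enumeration of the (finite) set of action derivatives of e (the result is independent of the enumeration up to provability since Mil⁻ contains associativity, commutativity and idempotency of +). -/

import Mathlib

namespace RegEx

/-- Star expressions over an action alphabet `A`. -/
inductive StExp (A : Type) : Type
  | zero : StExp A
  | one : StExp A
  | act : A → StExp A
  | add : StExp A → StExp A → StExp A
  | mul : StExp A → StExp A → StExp A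
  | star : StExp A → StExp A
  deriving DecidableEq

instance {A : Type} : Zero (StExp A) := ⟨StExp.zero⟩
instance {A : Type} : One (StExp A) := ⟨StExp.one⟩
instance {A : Type} : Add (StExp A) := ⟨StExp.add⟩
instance {A : Type} : Mul (StExp A) := ⟨StExp.mul⟩

/-- Immediate termination `e↓`. -/
inductive Term {A : Type} : StExp A → Prop
  | one : Term 1
  | addL {e f : StExp A} : Term e → Term (e + f)
  | addR {e f : StExp A} : Term f → Term (e + f)
  | mul {e f : StExp A} : Term e → Term f → Term (e * f)
  | star (e : StExp A) : Term e.star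

/-- The SOS transition relation `e —a→ e'`. -/
inductive Step {A : Type} : StExp A → A → StExp A → Prop
  | act (a : A) : Step (StExp.act a) a 1
  | addL {e1 e2 : StExp A} {a : A} {e' : StExp A} : Step e1 a e' → Step (e1 + e2) a e'
  | addR {e1 e2 : StExp A} {a : A} {e' : StExp A} : Step e2 a e' → Step (e1 + e2) a e'
  | mulL {e1 e2 : StExp A} {a : A} {e1' : StExp A} :
      Step e1 a e1' → Step (e1 * e2) a (e1' * e2)
  | mulR {e1 e2 : StExp A} {a : A} {e2' : StExp A} :
      Term e1 → Step e2 a e2' → Step (e1 * e2) a e2'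
  | star {e : StExp A} {a : A} {e' : StExp A} :
      Step e a e' → Step e.star a (e' * e.star)

/-- Boolean immediate-termination test. -/
def termB {A : Type} : StExp A → Bool
  | .zero => false
  | .one => true
  | .act _ => false
  | .add e f => termB e || termB f
  | .mul e f => termB e && termB f
  | .star _ => true

/-- Star height. -/
def sh {A : Type} : StExp A → ℕ
  | .zero => 0
  | .one => 0
  | .act _ => 0
  | .add e f => max (sh e) (sh f)
  | .mul e f => max (sh e) (sh f)
  | .star e => sh e + 1

/-- The axioms of Milner's purely equational system `Mil⁻`. -/
inductive MilAx {A : Type} : StExp A → StExp A → Prop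
  | assocAdd (e f g : StExp A) : MilAx ((e + f) + g) (e + (f + g))
  | addZero (e : StExp A) : MilAx (e + 0) e
  | commAdd (e f : StExp A) : MilAx (e + f) (f + e)
  | idemAdd (e : StExp A) : MilAx (e + e) e
  | assocMul (e f g : StExp A) : MilAx ((e * f) * g) (e * (f * g))
  | rdistr (e f g : StExp A) : MilAx ((e + f) * g) (e * g + f * g)
  | oneMul (e : StExp A) : MilAx (1 * e) e
  | mulOne (e : StExp A) : MilAx (e * 1) e
  | zeroMul (e : StExp A) : MilAx (0 * e) 0
  | recStar (e : StExp A) : MilAx e.star (1 + e * e.star)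
  | trmBody (e : StExp A) : MilAx e.star (1 + e).star

/-- The ACI axioms for `+`. -/
inductive ACIAx {A : Type} : StExp A → StExp A → Prop
  | assoc (e f g : StExp A) : ACIAx ((e + f) + g) (e + (f + g))
  | comm (e f : StExp A) : ACIAx (e + f) (f + e)
  | idem (e : StExp A) : ACIAx (e + e) e

/-- Equational-logic derivability from a set of axioms `ax`. -/
inductive EqDeriv {A : Type} (ax : StExp A → StExp A → Prop) : StExp A → StExp A → Prop
  | ax {e f : StExp A} : ax e f → EqDeriv ax e f
  | refl (e : StExp A) : EqDeriv ax e e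
  | symm {e f : StExp A} : EqDeriv ax e f → EqDeriv ax f e
  | trans {e f g : StExp A} : EqDeriv ax e f → EqDeriv ax f g → EqDeriv ax e g
  | addCongr {e1 f1 e2 f2 : StExp A} :
      EqDeriv ax e1 f1 → EqDeriv ax e2 f2 → EqDeriv ax (e1 + e2) (f1 + f2)
  | mulCongr {e1 f1 e2 f2 : StExp A} :
      EqDeriv ax e1 f1 → EqDeriv ax e2 f2 → EqDeriv ax (e1 * e2) (f1 * f2)
  | starCongr {e f : StExp A} : EqDeriv ax e f → EqDeriv ax e.star f.star

/-- Derivability in `Mil⁻`. -/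
def MilMinus {A : Type} : StExp A → StExp A → Prop := EqDeriv MilAx

/-- Milner's system `Mil = Mil⁻ + RSP*`. -/
inductive Mil {A : Type} : StExp A → StExp A → Prop
  | ax {e f : StExp A} : MilAx e f → Mil e f
  | refl (e : StExp A) : Mil e e
  | symm {e f : StExp A} : Mil e f → Mil f e
  | trans {e f g : StExp A} : Mil e f → Mil f g → Mil e g
  | addCongr {e1 f1 e2 f2 : StExp A} : Mil e1 f1 → Mil e2 f2 → Mil (e1 + e2) (f1 + f2)
  | mulCongr {e1 f1 e2 f2 : StExp A} : Mil e1 f1 → Mil e2 f2 → Mil (e1 * e2) (f1 * f2)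
  | starCongr {e f : StExp A} : Mil e f → Mil e.star f.star
  | rsp {e f g : StExp A} : Mil e (f * e + g) → ¬ Term f → Mil e (f.star * g)

/-- The variant system `Mil' = Mil⁻ + USP*`. -/
inductive Mil' {A : Type} : StExp A → StExp A → Prop
  | ax {e f : StExp A} : MilAx e f → Mil' e f
  | refl (e : StExp A) : Mil' e e
  | symm {e f : StExp A} : Mil' e f → Mil' f e
  | trans {e f g : StExp A} : Mil' e f → Mil' f g → Mil' e g
  | addCongr {e1 f1 e2 f2 : StExp A} : Mil' e1 f1 → Mil' e2 f2 → Mil' (e1 + e2) (f1 + f2)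
  | mulCongr {e1 f1 e2 f2 : StExp A} : Mil' e1 f1 → Mil' e2 f2 → Mil' (e1 * e2) (f1 * f2)
  | starCongr {e f : StExp A} : Mil' e f → Mil' e.star f.star
  | usp {e1 e2 f g : StExp A} :
      Mil' e1 (f * e1 + g) → Mil' e2 (f * e2 + g) → ¬ Term f → Mil' e1 e2

/-- Sum of a list of star expressions (empty sum is `0`). -/
def listSum {A : Type} : List (StExp A) → StExp A
  | [] => 0
  | e :: l => listSum l + e

/-- Star expression denoted by a transition label in `A ∪ {1}`. -/
def lab {A : Type} : Option A → StExp A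
  | none => 1
  | some a => StExp.act a

/-- Antimirov's partial derivatives. -/
def pderiv {A : Type} [DecidableEq A] (a : A) : StExp A → Finset (StExp A)
  | .zero => ∅
  | .one => ∅
  | .act b => if b = a then {1} else ∅
  | .add e1 e2 => pderiv a e1 ∪ pderiv a e2
  | .mul e1 e2 =>
      if termB e1 then (pderiv a e1).image (· * e2) ∪ pderiv a e2
      else (pderiv a e1).image (· * e2)
  | .star e => (pderiv a e).image (· * e.star)

/-- The set of action derivatives `A∂(e)`. -/
def AD {A : Type} (e : StExp A) : Set (A × StExp A) := {p | Step e p.1 p.2}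

/-- A bisimulation w.r.t. the SOS semantics of star expressions. -/
def IsBisim {A : Type} (B : StExp A → StExp A → Prop) : Prop :=
  ∀ u v, B u v →
    (∀ (a : A) u', Step u a u' → ∃ v', Step v a v' ∧ B u' v') ∧
    (∀ (a : A) v', Step v a v' → ∃ u', Step u a u' ∧ B u' v') ∧
    (Term u ↔ Term v)

/-- Bisimilarity of the process interpretations of two star expressions. -/
def Bisim {A : Type} (e f : StExp A) : Prop := ∃ B, IsBisim B ∧ B e f

/-! ### 1-charts with entry/body-labelled transitions -/

/-- Data of a (level-labelled) 1-chart: transitions carry an action label in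
`A ∪ {1}` (`none` = the empty-step label `1`) and a marking level in `ℕ`
(`0` = body transition, positive = loop-entry transition). -/
structure ChartData (A V : Type) where
  start : V
  tr : V → Option A → ℕ → V → Prop
  term : V → Bool

namespace ChartData

variable {A V : Type}

def anyStep (C : ChartData A V) (x y : V) : Prop := ∃ l n, C.tr x l n y

def bodyStep (C : ChartData A V) (x y : V) : Prop := ∃ l, C.tr x l 0 y

def oneTr (C : ChartData A V) (x y : V) : Prop := ∃ n, C.tr x none n y

/-- Termination constant of the chart at a vertex. -/
def tau (C : ChartData A V) (v : V) : StExp A := if C.term v then 1 else 0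

/-- Weakly guarded: no cycle of 1-transitions. -/
def WeaklyGuarded (C : ChartData A V) : Prop :=
  ∀ v, ¬ Relation.TransGen C.oneTr v v

/-- The entry/body labelling is guarded: loop-entry transitions carry proper labels. -/
def GuardedW (C : ChartData A V) : Prop :=
  ∀ v n w, 0 < n → ¬ C.tr v none n w

/-- (w1): no cycle of body transitions. -/
def W1 (C : ChartData A V) : Prop :=
  ∀ v, ¬ Relation.TransGen C.bodyStep v v

def AvoidStep (C : ChartData A V) (v x y : V) : Prop := C.anyStep x y ∧ y ≠ v

/-- (w2a): from the target of a loop-entry transition of level `n` at `v`, as long as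
`v` is not yet revisited, all transitions taken have level `< n`. -/
def W2a (C : ChartData A V) : Prop :=
  ∀ v n l w, 0 < n → C.tr v l n w → w ≠ v →
    ∀ x, Relation.ReflTransGen (C.AvoidStep v) w x →
      ∀ l' m y, C.tr x l' m y → y ≠ v → m < n

/-- (w2b): every infinite path from the target of a loop-entry transition at `v`
returns to `v`. -/
def W2b (C : ChartData A V) : Prop :=
  ∀ v n l w, 0 < n → C.tr v l n w →
    ∀ p : ℕ → V, p 0 = w → (∀ i, C.anyStep (p i) (p (i + 1))) → ∃ i, p i = v

/-- The entry/body labelling is a layered LEE-witness. -/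
def IsLLEE (C : ChartData A V) : Prop := C.W1 ∧ C.W2a ∧ C.W2b

/-- Body path avoiding the vertex `v`. -/
def BodyAvoid (C : ChartData A V) (v : V) (x y : V) : Prop :=
  Relation.ReflTransGen (fun x y => C.bodyStep x y ∧ y ≠ v) x y

/-- `C.InLoop v w`: `w` is in the body of the loop at `v` (`v ↘ w`, i.e. `w ↘⁻ v`). -/
def InLoop (C : ChartData A V) (v w : V) : Prop :=
  ∃ n l v', 0 < n ∧ C.tr v l n v' ∧ v' ≠ v ∧ C.BodyAvoid v v' w

end ChartData

/-- An LLEE-witnessed coinductive proof over the system `Mil⁻`-style equational logic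
with axioms `ax`, of the equation `e1 = e2`. -/
structure LCoProof (A : Type) (ax : StExp A → StExp A → Prop) (e1 e2 : StExp A) where
  V : Type
  fin : Finite V
  C : ChartData A V
  reach : ∀ v, Relation.ReflTransGen C.anyStep C.start v
  wg : C.WeaklyGuarded
  llee : C.IsLLEE
  L1 : V → StExp A
  L2 : V → StExp A
  trs : V → List (Option A × V)
  trs_spec : ∀ v p, p ∈ trs v ↔ ∃ n, C.tr v p.1 n p.2
  trs_nodup : ∀ v, (trs v).Nodup
  sol1 : ∀ v, EqDeriv ax (L1 v)
    (C.tau v + listSum ((trs v).map fun p => lab p.1 * L1 p.2))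
  sol2 : ∀ v, EqDeriv ax (L2 v)
    (C.tau v + listSum ((trs v).map fun p => lab p.1 * L2 p.2))
  start1 : L1 C.start = e1
  start2 : L2 C.start = e2

/-- The coinductive variant `cMil` of Milner's system: equational logic with the
axioms of `Mil⁻` and the rule scheme `LCP_n`. -/
inductive CMil {A : Type} : StExp A → StExp A → Prop
  | ax {e f : StExp A} : MilAx e f → CMil e f
  | refl (e : StExp A) : CMil e e
  | symm {e f : StExp A} : CMil e f → CMil f e
  | trans {e f g : StExp A} : CMil e f → CMil f g → CMil e g
  | addCongr {e1 f1 e2 f2 : StExp A} : CMil e1 f1 → CMil e2 f2 → CMil (e1 + e2) (f1 + f2)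
  | mulCongr {e1 f1 e2 f2 : StExp A} : CMil e1 f1 → CMil e2 f2 → CMil (e1 * e2) (f1 * f2)
  | starCongr {e f : StExp A} : CMil e f → CMil e.star f.star
  | lcp {e f : StExp A} (Γ : List (StExp A × StExp A)) :
      (∀ p ∈ Γ, CMil p.1 p.2) →
      Nonempty (LCoProof A (fun x y => MilAx x y ∨ (x, y) ∈ Γ) e f) →
      CMil e f

/-! ### Stacked star expressions and the 1-chart interpretation -/

/-- Star expressions extended with the stacked product `⋆` (constructor `smul`). -/
inductive SExp (A : Type) : Type
  | zero : SExp A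
  | one : SExp A
  | act : A → SExp A
  | add : SExp A → SExp A → SExp A
  | mul : SExp A → SExp A → SExp A
  | star : SExp A → SExp A
  | smul : SExp A → SExp A → SExp A
  deriving DecidableEq

/-- Embedding of star expressions into stacked star expressions. -/
def emb {A : Type} : StExp A → SExp A
  | .zero => .zero
  | .one => .one
  | .act a => .act a
  | .add e f => .add (emb e) (emb f)
  | .mul e f => .mul (emb e) (emb f)
  | .star e => .star (emb e)

/-- The projection `π` replacing stacked products by ordinary products. -/
def proj {A : Type} : SExp A → StExp A
  | .zero => 0
  | .one => 1
  | .act a => StExp.act a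
  | .add e f => proj e + proj f
  | .mul e f => proj e * proj f
  | .star e => (proj e).star
  | .smul e f => proj e * proj f

/-- Immediate termination for stacked star expressions (no termination at `⋆`). -/
inductive STerm {A : Type} : SExp A → Prop
  | one : STerm SExp.one
  | addL {e f : SExp A} : STerm e → STerm (SExp.add e f)
  | addR {e f : SExp A} : STerm f → STerm (SExp.add e f)
  | mul {e f : SExp A} : STerm e → STerm f → STerm (SExp.mul e f)
  | star (e : SExp A) : STerm (SExp.star e)

/-- Boolean immediate-termination test for stacked star expressions. -/
def sTermB {A : Type} : SExp A → Bool
  | .zero => false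
  | .one => true
  | .act _ => false
  | .add e f => sTermB e || sTermB f
  | .mul e f => sTermB e && sTermB f
  | .star _ => true
  | .smul _ _ => false

/-- Termination constant of a stacked star expression. -/
def sTau {A : Type} (E : SExp A) : StExp A := if sTermB E then 1 else 0

/-- The TSS of the 1-chart interpretation: transitions between stacked star
expressions, labelled by `A ∪ {1}` (`none` is the empty-step label `1`). -/
inductive SStep {A : Type} : SExp A → Option A → SExp A → Prop
  | act (a : A) : SStep (SExp.act a) (some a) SExp.one
  | addL {e1 e2 : SExp A} {a : A} {E' : SExp A} :
      SStep e1 (some a) E' → SStep (SExp.add e1 e2) (some a) E'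
  | addR {e1 e2 : SExp A} {a : A} {E' : SExp A} :
      SStep e2 (some a) E' → SStep (SExp.add e1 e2) (some a) E'
  | mulL {E1 e2 : SExp A} {l : Option A} {E1' : SExp A} :
      SStep E1 l E1' → SStep (SExp.mul E1 e2) l (SExp.mul E1' e2)
  | mulR {e1 e2 : SExp A} {a : A} {E2' : SExp A} :
      STerm e1 → SStep e2 (some a) E2' → SStep (SExp.mul e1 e2) (some a) E2'
  | star {e : SExp A} {a : A} {E' : SExp A} :
      SStep e (some a) E' → SStep (SExp.star e) (some a) (SExp.smul E' (SExp.star e))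
  | smulL {E1 f : SExp A} {l : Option A} {E1' : SExp A} :
      SStep E1 l E1' → SStep (SExp.smul E1 f) l (SExp.smul E1' f)
  | smulT {E1 f : SExp A} : STerm E1 → SStep (SExp.smul E1 f) none f

/-- One transition step (any label) between stacked star expressions. -/
def sR {A : Type} (X Y : SExp A) : Prop := ∃ l, SStep X l Y


section Aux
variable {A : Type}

open EqDeriv MilAx

lemma mm_trans {e f g : StExp A} (h1 : MilMinus e f) (h2 : MilMinus f g) : MilMinus e g :=
  EqDeriv.trans h1 h2

lemma mm_zero_add (e : StExp A) : MilMinus (0 + e) e :=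
  EqDeriv.trans (EqDeriv.ax (MilAx.commAdd _ _)) (EqDeriv.ax (MilAx.addZero _))

lemma mm_append (l1 l2 : List (StExp A)) :
    MilMinus (listSum (l1 ++ l2)) (listSum l1 + listSum l2) := by
  induction l1 with
  | nil =>
    simp only [List.nil_append, listSum]
    exact EqDeriv.symm (mm_zero_add _)
  | cons x t ih =>
    simp only [List.cons_append, listSum]
    -- listSum (t++l2) + x ≡ (listSum t + listSum l2) + x ≡ (listSum t + x) + l2
    refine EqDeriv.trans (EqDeriv.addCongr ih (EqDeriv.refl x)) ?_
    -- ((a+b)+x) ≡ (a+x)+b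
    refine EqDeriv.trans (EqDeriv.ax (MilAx.assocAdd _ _ _)) ?_
    refine EqDeriv.trans (EqDeriv.addCongr (EqDeriv.refl _) (EqDeriv.ax (MilAx.commAdd _ _))) ?_
    exact EqDeriv.symm (EqDeriv.ax (MilAx.assocAdd _ _ _))

lemma mm_absorb {x : StExp A} {l : List (StExp A)} (h : x ∈ l) :
    MilMinus (listSum l + x) (listSum l) := by
  induction l with
  | nil => cases h
  | cons y t ih =>
    simp only [listSum]
    rcases List.mem_cons.mp h with rfl | hx
    · exact EqDeriv.trans (EqDeriv.ax (MilAx.assocAdd _ _ _))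
        (EqDeriv.addCongr (EqDeriv.refl _) (EqDeriv.ax (MilAx.idemAdd _)))
    · refine EqDeriv.trans (EqDeriv.ax (MilAx.assocAdd _ _ _)) ?_
      refine EqDeriv.trans (EqDeriv.addCongr (EqDeriv.refl _) (EqDeriv.ax (MilAx.commAdd _ _))) ?_
      refine EqDeriv.trans (EqDeriv.symm (EqDeriv.ax (MilAx.assocAdd _ _ _))) ?_
      exact EqDeriv.addCongr (ih hx) (EqDeriv.refl _)

lemma mm_subset {l1 l2 : List (StExp A)} (h : ∀ x ∈ l1, x ∈ l2) :
    MilMinus (listSum l2 + listSum l1) (listSum l2) := by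
  induction l1 with
  | nil =>
    simp only [listSum]
    exact EqDeriv.ax (MilAx.addZero _)
  | cons x t ih =>
    simp only [listSum]
    refine EqDeriv.trans (EqDeriv.symm (EqDeriv.ax (MilAx.assocAdd _ _ _))) ?_
    refine EqDeriv.trans (EqDeriv.addCongr (ih (fun y hy => h y (List.mem_cons_of_mem _ hy)))
      (EqDeriv.refl _)) ?_
    exact mm_absorb (h x List.mem_cons_self)

lemma mm_setEq {l1 l2 : List (StExp A)} (h : ∀ x, x ∈ l1 ↔ x ∈ l2) :
    MilMinus (listSum l1) (listSum l2) := by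
  have h1 : MilMinus (listSum l1 + listSum l2) (listSum l1) :=
    mm_subset (fun x hx => (h x).mpr hx)
  have h2 : MilMinus (listSum l2 + listSum l1) (listSum l2) :=
    mm_subset (fun x hx => (h x).mp hx)
  exact EqDeriv.trans (EqDeriv.symm h1)
    (EqDeriv.trans (EqDeriv.ax (MilAx.commAdd _ _)) h2)

lemma mm_pair_distr (l : List (A × StExp A)) (g : StExp A) :
    MilMinus (listSum (l.map fun p => StExp.act p.1 * p.2) * g)
      (listSum (l.map fun p => StExp.act p.1 * (p.2 * g))) := by
  induction l with
  | nil =>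
    simp only [List.map_nil, listSum]
    exact EqDeriv.ax (MilAx.zeroMul _)
  | cons x t ih =>
    simp only [List.map_cons, listSum]
    refine EqDeriv.trans (EqDeriv.ax (MilAx.rdistr _ _ _)) ?_
    exact EqDeriv.addCongr ih (EqDeriv.ax (MilAx.assocMul _ _ _))

lemma termB_iff (e : StExp A) : termB e = true ↔ Term e := by
  induction e with
  | zero => simp [termB]; intro h; cases h
  | one => simp [termB]; exact Term.one
  | act a => simp [termB]; intro h; cases h
  | add e f ihe ihf =>
    simp only [termB, Bool.or_eq_true, ihe, ihf]
    constructor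
    · rintro (h | h)
      · exact Term.addL h
      · exact Term.addR h
    · rintro (_ | _ | h | h)
      · exact Or.inl ‹_›
      · exact Or.inr ‹_›
  | mul e f ihe ihf =>
    simp only [termB, Bool.and_eq_true, ihe, ihf]
    constructor
    · rintro ⟨h1, h2⟩; exact Term.mul h1 h2
    · rintro (_ | _ | _ | ⟨h1, h2⟩); exact ⟨‹_›, ‹_›⟩
  | star e ih => simp [termB]; exact Term.star e

/-- Canonical derivative list. -/
def dl : StExp A → List (A × StExp A)
  | .zero => []
  | .one => []
  | .act a => [(a, 1)]
  | .add e f => dl e ++ dl f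
  | .mul e f =>
      if termB e then (dl e).map (fun p => (p.1, p.2 * f)) ++ dl f
      else (dl e).map (fun p => (p.1, p.2 * f))
  | .star e => (dl e).map (fun p => (p.1, p.2 * e.star))

lemma dl_spec (e : StExp A) : ∀ p : A × StExp A, p ∈ dl e ↔ Step e p.1 p.2 := by
  induction e with
  | zero => rintro ⟨a, x⟩; simp [dl]; intro h; cases h
  | one => rintro ⟨a, x⟩; simp [dl]; intro h; cases h
  | act a =>
    rintro ⟨b, x⟩
    simp only [dl, List.mem_singleton, Prod.mk.injEq]
    constructor
    · rintro ⟨rfl, rfl⟩; exact Step.act _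
    · intro h; cases h; exact ⟨rfl, rfl⟩
  | add e f ihe ihf =>
    rintro ⟨a, x⟩
    simp only [dl, List.mem_append, ihe, ihf]
    constructor
    · rintro (h | h)
      · exact Step.addL h
      · exact Step.addR h
    · intro h; cases h with
      | addL h => exact Or.inl h
      | addR h => exact Or.inr h
  | mul e f ihe ihf =>
    rintro ⟨a, x⟩
    by_cases ht : termB e
    · simp only [dl, if_pos ht, List.mem_append, List.mem_map]
      constructor
      · rintro (⟨⟨b, y⟩, hq, h⟩ | h)
        · cases h; exact Step.mulL ((ihe _).mp hq)
        · exact Step.mulR ((termB_iff e).mp ht) ((ihf _).mp h)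
      · intro h; cases h with
        | mulL h => exact Or.inl ⟨(_, _), (ihe _).mpr h, rfl⟩
        | mulR ht' h => exact Or.inr ((ihf _).mpr h)
    · simp only [dl, if_neg ht, List.mem_map]
      constructor
      · rintro ⟨⟨b, y⟩, hq, h⟩
        cases h; exact Step.mulL ((ihe _).mp hq)
      · intro h; cases h with
        | mulL h => exact ⟨(_, _), (ihe _).mpr h, rfl⟩
        | mulR ht' h => exact absurd ((termB_iff e).mpr ht') ht
  | star e ih =>
    rintro ⟨a, x⟩
    simp only [dl, List.mem_map]
    constructor
    · rintro ⟨⟨b, y⟩, hq, h⟩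
      cases h; exact Step.star ((ih _).mp hq)
    · intro h; cases h with
      | star h => exact ⟨(_, _), (ih _).mpr h, rfl⟩

lemma mm_expand (e : StExp A) :
    MilMinus e ((if termB e then 1 else 0) +
      listSum ((dl e).map fun p => StExp.act p.1 * p.2)) := by
  induction e with
  | zero =>
    simp only [dl, termB, if_neg, List.map_nil, listSum, Bool.false_eq_true, if_false]
    exact EqDeriv.symm (EqDeriv.ax (MilAx.addZero _))
  | one =>
    simp only [dl, termB, List.map_nil, listSum, if_true]
    exact EqDeriv.symm (EqDeriv.ax (MilAx.addZero _))
  | act a =>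
    simp only [dl, termB, List.map_cons, List.map_nil, listSum, Bool.false_eq_true, if_false]
    -- act a ≡ 0 + (0 + act a * 1)
    refine EqDeriv.symm (EqDeriv.trans (mm_zero_add _) (EqDeriv.trans (mm_zero_add _) ?_))
    exact EqDeriv.ax (MilAx.mulOne _)
  | add e f ihe ihf =>
    simp only [dl, List.map_append]
    refine EqDeriv.trans (EqDeriv.addCongr ihe ihf) ?_
    -- (τe + De) + (τf + Df) ≡ τ(e+f) + listSum(append)
    refine EqDeriv.symm ?_
    refine EqDeriv.trans (EqDeriv.addCongr (EqDeriv.refl _) (mm_append _ _)) ?_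
    -- τ + (De + Df) ≡ (τe + De) + (τf + Df)
    have htau : MilMinus ((if termB (e + f) then 1 else 0) : StExp A)
        ((if termB e then 1 else 0) + (if termB f then 1 else 0)) := by
      show MilMinus (if termB e || termB f then 1 else 0) _
      cases he : termB e <;> cases hf : termB f <;> simp only [Bool.false_or, Bool.true_or,
        Bool.or_false, Bool.or_true, if_true, if_false, Bool.false_eq_true]
      · exact EqDeriv.symm (EqDeriv.ax (MilAx.addZero _))
      · exact EqDeriv.symm (mm_zero_add _)
      · exact EqDeriv.symm (EqDeriv.ax (MilAx.addZero _))
      · exact EqDeriv.symm (EqDeriv.ax (MilAx.idemAdd _))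
    refine EqDeriv.trans (EqDeriv.addCongr htau (EqDeriv.refl _)) ?_
    -- (a + b) + (c + d) ≡ (a + c) + (b + d)
    refine EqDeriv.trans (EqDeriv.ax (MilAx.assocAdd _ _ _)) ?_
    refine EqDeriv.trans (EqDeriv.addCongr (EqDeriv.refl _)
      (EqDeriv.trans (EqDeriv.symm (EqDeriv.ax (MilAx.assocAdd _ _ _)))
        (EqDeriv.trans (EqDeriv.addCongr (EqDeriv.ax (MilAx.commAdd _ _)) (EqDeriv.refl _))
          (EqDeriv.ax (MilAx.assocAdd _ _ _))))) ?_
    exact EqDeriv.symm (EqDeriv.ax (MilAx.assocAdd _ _ _))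
  | mul e f ihe ihf =>
    by_cases ht : termB e
    · simp only [dl, termB, ht, Bool.true_and, if_true, List.map_append, List.map_map]
      refine EqDeriv.trans (EqDeriv.mulCongr ihe (EqDeriv.refl f)) ?_
      rw [if_pos ht]
      refine EqDeriv.trans (EqDeriv.ax (MilAx.rdistr _ _ _)) ?_
      refine EqDeriv.trans (EqDeriv.addCongr (EqDeriv.ax (MilAx.oneMul _)) (mm_pair_distr _ _)) ?_
      refine EqDeriv.trans (EqDeriv.addCongr ihf (EqDeriv.refl _)) ?_
      refine EqDeriv.trans (EqDeriv.ax (MilAx.assocAdd _ _ _)) ?_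
      refine EqDeriv.addCongr (EqDeriv.refl _) ?_
      refine EqDeriv.trans (EqDeriv.ax (MilAx.commAdd _ _)) ?_
      refine EqDeriv.symm ?_
      refine EqDeriv.trans (mm_append _ _) ?_
      refine EqDeriv.addCongr ?_ (EqDeriv.refl _)
      apply EqDeriv.refl
    · simp only [dl, termB, ht, Bool.false_and, if_false, Bool.false_eq_true, List.map_map]
      refine EqDeriv.trans (EqDeriv.mulCongr ihe (EqDeriv.refl f)) ?_
      rw [if_neg ht]
      refine EqDeriv.trans (EqDeriv.ax (MilAx.rdistr _ _ _)) ?_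
      refine EqDeriv.addCongr (EqDeriv.ax (MilAx.zeroMul _)) (mm_pair_distr _ _)
  | star e ih =>
    simp only [dl, termB, if_true, List.map_map]
    have key : MilMinus e.star
        ((1 : StExp A) + listSum ((dl e).map fun p => StExp.act p.1 * p.2) * e.star) := by
      by_cases ht : termB e
      · -- e ≡ 1 + De, so e* ≡ (De)* and unfold
        have he : MilMinus e ((1 : StExp A) + listSum ((dl e).map fun p => StExp.act p.1 * p.2)) := by
          have := ih; rw [if_pos ht] at this; exact this
        have hstar : MilMinus e.star (listSum ((dl e).map fun p => StExp.act p.1 * p.2)).star :=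
          EqDeriv.trans (EqDeriv.starCongr he) (EqDeriv.symm (EqDeriv.ax (MilAx.trmBody _)))
        refine EqDeriv.trans hstar ?_
        refine EqDeriv.trans (EqDeriv.ax (MilAx.recStar _)) ?_
        exact EqDeriv.addCongr (EqDeriv.refl _)
          (EqDeriv.mulCongr (EqDeriv.refl _) (EqDeriv.symm hstar))
      · have he : MilMinus e ((0 : StExp A) + listSum ((dl e).map fun p => StExp.act p.1 * p.2)) := by
          have := ih; rw [if_neg ht] at this; exact this
        refine EqDeriv.trans (EqDeriv.ax (MilAx.recStar _)) ?_
        refine EqDeriv.addCongr (EqDeriv.refl _) ?_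
        refine EqDeriv.trans (EqDeriv.mulCongr he (EqDeriv.refl _)) ?_
        refine EqDeriv.trans (EqDeriv.ax (MilAx.rdistr _ _ _)) ?_
        refine EqDeriv.trans (EqDeriv.addCongr (EqDeriv.ax (MilAx.zeroMul _)) (EqDeriv.refl _)) ?_
        exact mm_zero_add _
    refine EqDeriv.trans key ?_
    exact EqDeriv.addCongr (EqDeriv.refl _) (mm_pair_distr _ _)

end Aux

end RegEx
open RegEx in
/-- in `Mil⁻` every star expression is provably equal to its
termination constant plus the sum over (any enumeration of) its action derivatives. -/
theorem stmt_2 {A : Type} (e : StExp A) (l : List (A × StExp A))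
    (hl : ∀ p : A × StExp A, p ∈ l ↔ Step e p.1 p.2) (hnd : l.Nodup) :
    MilMinus e ((if termB e then 1 else 0) +
      listSum (l.map fun p => StExp.act p.1 * p.2)) := by
  refine EqDeriv.trans (mm_expand e) ?_
  refine EqDeriv.addCongr (EqDeriv.refl _) (mm_setEq ?_)
  intro x
  simp only [List.mem_map]
  constructor
  · rintro ⟨p, hp, rfl⟩
    exact ⟨p, (hl p).mpr ((dl_spec e p).mp hp), rfl⟩
  · rintro ⟨p, hp, rfl⟩
    exact ⟨p, (dl_spec e p).mpr ((hl p).mp hp), rfl⟩
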